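/- For every z ∈ K with 1 + β·z ≠ 0, 2 + β·z ≠ 0, and z ≠ x_i for all i, one has [1/((1+βz)(2+βz))] · ∏_{i=1}^n (z ⊕ x_i)/(z ⊖ x_i) = 1/(1+βz) − [∏_{i=1}^n (1+β·x_i)]/(2+βz) + Σ_{i=1}^n [x_i/(z − x_i)] · ∏_{j≠i} (x_i ⊕ x_j)/(x_i ⊖ x_j). -/

import Mathlib

open Finset
def Rr {K : Type*} [Field K] (β a b : K) : K := (a + b + β*a*b) * (1 + β*b) / (a - b)

lemma L1 {K : Type*} [Field K] (β z w : K) (h1 : 1+β*z ≠ 0) (h2 : z - w ≠ 0) :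
    Rr β z w / (1+β*z) = 1/(1+β*z) + w*(2+β*w)/(z-w) := by
  unfold Rr
  rw [div_add_div _ _ h1 h2, div_div, div_eq_div_iff (mul_ne_zero h2 h1) (mul_ne_zero h1 h2)]
  ring

lemma L2 {K : Type*} [Field K] (β z w : K) (h1 : 2+β*z ≠ 0) (h2 : z - w ≠ 0) :
    Rr β z w / (2+β*z) = (1+β*w)/(2+β*z) + w*(1+β*w)/(z-w) := by
  unfold Rr
  rw [div_add_div _ _ h1 h2, div_div, div_eq_div_iff (mul_ne_zero h2 h1) (mul_ne_zero h1 h2)]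
  ring

lemma L3 {K : Type*} [Field K] (β z w y : K) (hzw : z - w ≠ 0) (hzy : z - y ≠ 0)
    (hwy : w - y ≠ 0) :
    Rr β z w / (z - y) = Rr β y w / (z - y) + w*(1+β*w)*(2+β*w)/(w-y)/(z-w) := by
  have hyw : y - w ≠ 0 := fun h => hwy (by linear_combination -h)
  unfold Rr
  rw [div_div, div_div, div_div, div_add_div _ _ (mul_ne_zero hyw hzy) (mul_ne_zero hwy hzw),
    div_eq_div_iff (mul_ne_zero hzw hzy) (mul_ne_zero (mul_ne_zero hyw hzy) (mul_ne_zero hwy hzw))]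
  ring

lemma L4 {K : Type*} [Field K] (β a b : K) (h : 2+β*a = 0) (hab : a - b ≠ 0) :
    Rr β a b = 1+β*b := by
  unfold Rr
  have : a + b + β*a*b = a - b := by linear_combination b * h
  rw [this, mul_comm, mul_div_assoc, div_self hab, mul_one]

lemma aux {K : Type*} [Field K] (β : K) {ι : Type*} [DecidableEq ι] (x : ι → K) :
    ∀ (s : Finset ι), (∀ i ∈ s, ∀ j ∈ s, x i = x j → i = j) →
    (∀ i ∈ s, 1 + β * x i ≠ 0) →
    ∀ z, 1 + β*z ≠ 0 → 2 + β*z ≠ 0 → (∀ i ∈ s, z ≠ x i) →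
    (1/((1+β*z)*(2+β*z))) * ∏ i ∈ s, Rr β z (x i)
      = 1/(1+β*z) - (∏ i ∈ s, (1+β*x i))/(2+β*z)
        + ∑ i ∈ s, (x i/(z - x i)) * ∏ j ∈ s.erase i, Rr β (x i) (x j) := by
  intro s
  induction s using Finset.induction_on with
  | empty =>
    intro _ _ z hz1 hz2 _
    simp only [prod_empty, sum_empty, mul_one, add_zero]
    field_simp
    ring
  | @insert a s ha ih =>
    intro hinj hxu z hz1 hz2 hzs
    have hinj' : ∀ i ∈ s, ∀ j ∈ s, x i = x j → i = j := fun i hi j hj h =>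
      hinj i (mem_insert_of_mem hi) j (mem_insert_of_mem hj) h
    have hxu' : ∀ i ∈ s, 1 + β * x i ≠ 0 := fun i hi => hxu i (mem_insert_of_mem hi)
    have hzs' : ∀ i ∈ s, z ≠ x i := fun i hi => hzs i (mem_insert_of_mem hi)
    have hxa1 : 1 + β * x a ≠ 0 := hxu a (mem_insert_self a s)
    have hax : ∀ i ∈ s, x a - x i ≠ 0 := by
      intro i hi h
      have : x a = x i := by linear_combination h
      exact ha (hinj a (mem_insert_self a s) i (mem_insert_of_mem hi) this ▸ hi)
    have hzx : ∀ i ∈ s, z - x i ≠ 0 := by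
      intro i hi h
      exact hzs' i hi (by linear_combination h)
    have hza : z - x a ≠ 0 := by
      intro h; exact hzs a (mem_insert_self a s) (by linear_combination h)
    -- abbreviations
    set Ps := ∏ i ∈ s, (1+β*x i) with hPs
    set Pa := ∏ j ∈ s, Rr β (x a) (x j) with hPa
    set T := ∑ i ∈ s, (x i/(x a - x i)) * ∏ j ∈ s.erase i, Rr β (x i) (x j) with hT
    -- key identity for the new residue
    have hKey : Pa = (2+β*x a) - Ps*(1+β*x a) + (1+β*x a)*(2+β*x a) * T := by
      by_cases h2a : 2 + β * x a = 0
      · have hPaP : Pa = Ps := by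
          rw [hPa, hPs]
          exact prod_congr rfl (fun j hj => L4 β _ _ h2a (hax j hj))
        have hm1 : 1 + β * x a = -1 := by linear_combination h2a
        rw [hPaP, h2a, hm1]; ring
      · have E2 := ih hinj' hxu' (x a) hxa1 h2a (fun i hi h => hax i hi (by linear_combination h))
        rw [← hT, ← hPa] at E2
        have E3 : Pa = ((1+β*x a)*(2+β*x a)) * (1/(1+β*x a) - Ps/(2+β*x a) + T) := by
          rw [← E2]; field_simp
        rw [E3]; field_simp
    -- rearrange the sum
    have hsum : (∑ i ∈ s, (x i/(z - x i)) * ∏ j ∈ s.erase i, Rr β (x i) (x j)) * Rr β z (x a)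
        = (∑ i ∈ s, (x i/(z - x i)) * (Rr β (x i) (x a) * ∏ j ∈ s.erase i, Rr β (x i) (x j)))
          + (x a*(1+β*x a)*(2+β*x a)/(z - x a)) * T := by
      rw [hT, Finset.sum_mul, Finset.mul_sum, ← Finset.sum_add_distrib]
      refine Finset.sum_congr rfl (fun i hi => ?_)
      have h3 := L3 β z (x a) (x i) hza (hzx i hi) (hax i hi)
      linear_combination (x i * ∏ j ∈ s.erase i, Rr β (x i) (x j)) * h3
    -- main computation
    rw [prod_insert ha, prod_insert ha, sum_insert ha, erase_insert ha]
    have hrw : ∑ i ∈ s, (x i/(z - x i)) * ∏ j ∈ (insert a s).erase i, Rr β (x i) (x j)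
        = ∑ i ∈ s, (x i/(z - x i)) * (Rr β (x i) (x a) * ∏ j ∈ s.erase i, Rr β (x i) (x j)) := by
      refine Finset.sum_congr rfl (fun i hi => ?_)
      have hia : i ≠ a := fun h => ha (h ▸ hi)
      rw [Finset.erase_insert_of_ne (Ne.symm hia), prod_insert (fun h => ha (mem_of_mem_erase h))]
    rw [hrw]
    have E1 := ih hinj' hxu' z hz1 hz2 hzs'
    rw [← hPs, ← hPa]
    calc (1/((1+β*z)*(2+β*z))) * (Rr β z (x a) * ∏ i ∈ s, Rr β z (x i))
        = ((1/((1+β*z)*(2+β*z))) * ∏ i ∈ s, Rr β z (x i)) * Rr β z (x a) := by ring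
      _ = (1/(1+β*z) - Ps/(2+β*z)
            + ∑ i ∈ s, (x i/(z - x i)) * ∏ j ∈ s.erase i, Rr β (x i) (x j)) * Rr β z (x a) := by
          rw [E1]
      _ = _ := by
          have h1 := L1 β z (x a) hz1 hza
          have h2 := L2 β z (x a) hz2 hza
          linear_combination h1 - Ps * h2 + hsum - (x a/(z - x a)) * hKey



/-- connective K-theory case at `t = -1` of
`M_F(z) = 1/((1+βz)(2+βz)) - β·GP₁/(2+βz)`, with `1 + β·GP₁ = ∏ᵢ(1+βxᵢ)`:
`(1/((1+βz)(2+βz))) ∏ᵢ (z ⊕ xᵢ)/(z ⊖ xᵢ)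
  = 1/(1+βz) - ∏ᵢ(1+βxᵢ)/(2+βz) + Σᵢ xᵢ/(z-xᵢ) ∏_{j≠i} (xᵢ ⊕ xⱼ)/(xᵢ ⊖ xⱼ)`. -/
theorem stmt3 {K : Type*} [Field K] (β : K) (n : ℕ) (hn : 1 ≤ n)
    (x : Fin n → K)
    (hx : Function.Injective x)
    (hxu : ∀ i, 1 + β * x i ≠ 0)
    (oplus ominus : K → K → K)
    (hoplus : ∀ a b, oplus a b = a + b + β * a * b)
    (hominus : ∀ a b, ominus a b = (a - b) / (1 + β * b))
    (z : K) (hz1 : 1 + β * z ≠ 0) (hz2 : 2 + β * z ≠ 0) (hzx : ∀ i, z ≠ x i) :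
    (1 / ((1 + β * z) * (2 + β * z))) * ∏ i, oplus z (x i) / ominus z (x i)
      = 1 / (1 + β * z) - (∏ i, (1 + β * x i)) / (2 + β * z)
        + ∑ i, (x i / (z - x i))
            * ∏ j ∈ Finset.univ.erase i, oplus (x i) (x j) / ominus (x i) (x j) := by
  have hR : ∀ a b : K, oplus a b / ominus a b = Rr β a b := by
    intro a b
    rw [hoplus, hominus, div_div_eq_mul_div, Rr]
  simp only [hR]
  exact aux β x Finset.univ (fun i _ j _ h => hx h) (fun i _ => hxu i) z hz1 hz2
    (fun i _ => hzx i)
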